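/- Let T̃ admit an eigendecomposition T̃ = Q D Q^{-1} with spectral radius σ̃, and let T̂ satisfy T̂² = 0 and T̃ T̂ = 0. If u - u_{k+1} = (T̃ + T̂)(u - u_k) for all k, then ‖u - u_{k+1}‖ ≤ (σ̃^{k+1} + σ̃^k ‖T̂‖) ‖Q‖ ‖Q^{-1}‖ ‖u - u_0‖. -/

import Mathlib

section aux

lemma diag_clm_norm_le {n : ℕ} (e : Fin n → ℝ) (s : ℝ) (hs : 0 ≤ s)
    (he : ∀ i, |e i| ≤ s) :
    ‖Matrix.toEuclideanCLM (𝕜 := ℝ) (Matrix.diagonal e)‖ ≤ s := by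
  refine ContinuousLinearMap.opNorm_le_bound _ hs fun x => ?_
  set y := Matrix.toEuclideanCLM (𝕜 := ℝ) (Matrix.diagonal e) x with hy
  have happ : ∀ i, y i = e i * x i := by
    intro i
    have := congrFun (Matrix.ofLp_toEuclideanCLM (𝕜 := ℝ) (Matrix.diagonal e) x) i
    simp [hy, Matrix.toLin'_apply, Matrix.mulVec_diagonal]
  rw [EuclideanSpace.norm_eq, EuclideanSpace.norm_eq]
  rw [show s * Real.sqrt (∑ i, ‖x i‖ ^ 2) = Real.sqrt (s ^ 2 * ∑ i, ‖x i‖ ^ 2) by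
    rw [Real.sqrt_mul (by positivity), Real.sqrt_sq hs]]
  apply Real.sqrt_le_sqrt
  rw [Finset.mul_sum]
  apply Finset.sum_le_sum
  intro i _
  rw [happ i]
  have h1 : |e i * x i| ≤ s * |x i| := by
    rw [abs_mul]
    exact mul_le_mul_of_nonneg_right (he i) (abs_nonneg _)
  calc ‖e i * x i‖ ^ 2 = |e i * x i| ^ 2 := rfl
    _ ≤ (s * |x i|) ^ 2 := by
        exact pow_le_pow_left₀ (abs_nonneg _) h1 2
    _ = s ^ 2 * ‖x i‖ ^ 2 := by rw [mul_pow]; rfl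

end aux

/-- If `T̃ = Q D Q⁻¹` with `D` diagonal with entries of modulus at most `σ̃`,
`T̂² = 0`, `T̃ T̂ = 0`, and `u - u_{k+1} = (T̃ + T̂)(u - u_k)`, then
`‖u - u_{k+1}‖ ≤ (σ̃^{k+1} + σ̃^k ‖T̂‖) ‖Q‖ ‖Q⁻¹‖ ‖u - u_0‖`. -/
theorem stmt_6 {n : ℕ}
    (Ttil That Q Qinv : Matrix (Fin n) (Fin n) ℝ) (d : Fin n → ℝ)
    (hQ : Q * Qinv = 1) (hQ' : Qinv * Q = 1)
    (hTtil : Ttil = Q * Matrix.diagonal d * Qinv)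
    (σ : ℝ) (hσ : ∀ i, |d i| ≤ σ)
    (hThat2 : That * That = 0) (hTtilThat : Ttil * That = 0)
    (ubar : EuclideanSpace ℝ (Fin n)) (u : ℕ → EuclideanSpace ℝ (Fin n))
    (hrec : ∀ k : ℕ,
      ubar - u (k + 1) = Matrix.toEuclideanCLM (𝕜 := ℝ) (Ttil + That) (ubar - u k)) :
    ∀ k : ℕ,
      ‖ubar - u (k + 1)‖ ≤
        (σ ^ (k + 1) + σ ^ k * ‖Matrix.toEuclideanCLM (𝕜 := ℝ) That‖) *
          ‖Matrix.toEuclideanCLM (𝕜 := ℝ) Q‖ *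
          ‖Matrix.toEuclideanCLM (𝕜 := ℝ) Qinv‖ * ‖ubar - u 0‖ := by
  set f := Matrix.toEuclideanCLM (𝕜 := ℝ) (n := Fin n) with hf
  rcases Nat.eq_zero_or_pos n with rfl | hn
  · have h0 : ∀ j, ubar - u j = 0 := fun j => Subsingleton.elim _ _
    intro k
    simp only [h0, norm_zero, mul_zero]
    exact le_refl 0
  have hσ0 : 0 ≤ σ := le_trans (abs_nonneg _) (hσ ⟨0, hn⟩)
  -- powers of Ttil
  have hz : ∀ m, Ttil ^ (m + 1) * That = 0 := by
    intro m; rw [pow_succ, Matrix.mul_assoc, hTtilThat, Matrix.mul_zero]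
  have hz2 : ∀ m, That * Ttil ^ m * That = 0 := by
    intro m
    cases m with
    | zero => simpa using hThat2
    | succ m => rw [Matrix.mul_assoc, hz, Matrix.mul_zero]
  have hpow : ∀ k, (Ttil + That) ^ (k + 1) = Ttil ^ (k + 1) + That * Ttil ^ k := by
    intro k
    induction k with
    | zero => simp
    | succ k ih =>
        rw [pow_succ, ih, add_mul, mul_add, mul_add, hz k, add_zero, hz2 k,
          add_zero, ← pow_succ, mul_assoc, ← pow_succ]
  have hiter : ∀ k, ubar - u k = f ((Ttil + That) ^ k) (ubar - u 0) := by
    intro k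
    induction k with
    | zero => simp [f]
    | succ k ih =>
        rw [pow_succ', map_mul, ContinuousLinearMap.mul_apply, ← ih, hrec k]
  have hconj : ∀ m, Ttil ^ m = Q * Matrix.diagonal (fun i => d i ^ m) * Qinv := by
    intro m
    induction m with
    | zero => simp [hQ]
    | succ m ih =>
        rw [pow_succ, ih, hTtil]
        have hdd : Matrix.diagonal (fun i => d i ^ (m + 1)) =
            Matrix.diagonal (fun i => d i ^ m) * Matrix.diagonal d := by
          rw [Matrix.diagonal_mul_diagonal]
          congr 1
        rw [hdd]
        simp only [Matrix.mul_assoc]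
        rw [← Matrix.mul_assoc Qinv Q, hQ', Matrix.one_mul]
  have hTm : ∀ m, ‖f (Ttil ^ m)‖ ≤ σ ^ m * ‖f Q‖ * ‖f Qinv‖ := by
    intro m
    rw [hconj m, map_mul, map_mul]
    have hd : ‖f (Matrix.diagonal fun i => d i ^ m)‖ ≤ σ ^ m := by
      apply diag_clm_norm_le _ _ (by positivity)
      intro i
      rw [abs_pow]
      exact pow_le_pow_left₀ (abs_nonneg _) (hσ i) m
    calc ‖f Q * f (Matrix.diagonal fun i => d i ^ m) * f Qinv‖
        ≤ ‖f Q * f (Matrix.diagonal fun i => d i ^ m)‖ * ‖f Qinv‖ := norm_mul_le _ _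
      _ ≤ ‖f Q‖ * ‖f (Matrix.diagonal fun i => d i ^ m)‖ * ‖f Qinv‖ := by
          gcongr; exact norm_mul_le _ _
      _ ≤ ‖f Q‖ * σ ^ m * ‖f Qinv‖ := by gcongr
      _ = σ ^ m * ‖f Q‖ * ‖f Qinv‖ := by ring
  intro k
  rw [hiter (k + 1), hpow k, map_add, ContinuousLinearMap.add_apply]
  set x := ubar - u 0
  calc ‖f (Ttil ^ (k + 1)) x + f (That * Ttil ^ k) x‖
      ≤ ‖f (Ttil ^ (k + 1)) x‖ + ‖f (That * Ttil ^ k) x‖ := norm_add_le _ _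
    _ ≤ ‖f (Ttil ^ (k + 1))‖ * ‖x‖ + ‖f That‖ * ‖f (Ttil ^ k)‖ * ‖x‖ := by
        gcongr
        · exact ContinuousLinearMap.le_opNorm _ _
        · calc ‖f (That * Ttil ^ k) x‖ ≤ ‖f (That * Ttil ^ k)‖ * ‖x‖ :=
              ContinuousLinearMap.le_opNorm _ _
            _ ≤ ‖f That‖ * ‖f (Ttil ^ k)‖ * ‖x‖ := by
                gcongr; rw [map_mul]; exact norm_mul_le _ _
    _ ≤ (σ ^ (k + 1) * ‖f Q‖ * ‖f Qinv‖) * ‖x‖ +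
          ‖f That‖ * (σ ^ k * ‖f Q‖ * ‖f Qinv‖) * ‖x‖ := by
        gcongr
        · exact hTm (k + 1)
        · exact hTm k
    _ = (σ ^ (k + 1) + σ ^ k * ‖f That‖) * ‖f Q‖ * ‖f Qinv‖ * ‖x‖ := by ring
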